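/- The function p₅(r,t) = (4πt)^{-5/2} · [(r/sinh r)² + 2t(r cosh r − sinh r)/sinh³ r] · e^{-(r²/(4t) + 4t)} satisfies the radial heat equation on H⁵: ∂_t p = ∂_r² p + 4 coth(r) ∂_r p for all r > 0, t > 0. -/

import Mathlib

open Real

noncomputable def fdx (t x : ℝ) : ℝ :=
  (4 * π * t) ^ (-(5 : ℝ) / 2) *
    (2 * x / Real.sinh x ^ 2 - 2 * x ^ 2 * Real.cosh x / Real.sinh x ^ 3
      + 2 * t * (x * Real.sinh x ^ 2 - 3 * x * Real.cosh x ^ 2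
          + 3 * Real.sinh x * Real.cosh x) / Real.sinh x ^ 4
      - x / (2 * t) * ((x / Real.sinh x) ^ 2
          + 2 * t * (x * Real.cosh x - Real.sinh x) / Real.sinh x ^ 3)) *
    Real.exp (-(x ^ 2 / (4 * t) + 4 * t))

noncomputable def gdx (t x : ℝ) : ℝ :=
  (4 * π * t) ^ (-(5 : ℝ) / 2) *
    ((2 / Real.sinh x ^ 2 - 8 * x * Real.cosh x / Real.sinh x ^ 3
        - 2 * x ^ 2 * Real.sinh x / Real.sinh x ^ 3
        + 6 * x ^ 2 * Real.cosh x ^ 2 / Real.sinh x ^ 4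
        + 8 * t * (Real.sinh x ^ 3 - 2 * x * Real.sinh x ^ 2 * Real.cosh x
            + 3 * x * Real.cosh x ^ 3 - 3 * Real.sinh x * Real.cosh x ^ 2) / Real.sinh x ^ 5)
      - (((x / Real.sinh x) ^ 2
            + 2 * t * (x * Real.cosh x - Real.sinh x) / Real.sinh x ^ 3)
          + x * (2 * x / Real.sinh x ^ 2 - 2 * x ^ 2 * Real.cosh x / Real.sinh x ^ 3
            + 2 * t * (x * Real.sinh x ^ 2 - 3 * x * Real.cosh x ^ 2
                + 3 * Real.sinh x * Real.cosh x) / Real.sinh x ^ 4)) / (2 * t)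
      - x / (2 * t) * (2 * x / Real.sinh x ^ 2 - 2 * x ^ 2 * Real.cosh x / Real.sinh x ^ 3
            + 2 * t * (x * Real.sinh x ^ 2 - 3 * x * Real.cosh x ^ 2
                + 3 * Real.sinh x * Real.cosh x) / Real.sinh x ^ 4
          - x * ((x / Real.sinh x) ^ 2
              + 2 * t * (x * Real.cosh x - Real.sinh x) / Real.sinh x ^ 3) / (2 * t))) *
    Real.exp (-(x ^ 2 / (4 * t) + 4 * t))

noncomputable def pdt (t x : ℝ) : ℝ :=
  (4 * π * t) ^ (-(5 : ℝ) / 2) *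
    (-(5 / (2 * t)) * ((x / Real.sinh x) ^ 2
        + 2 * t * (x * Real.cosh x - Real.sinh x) / Real.sinh x ^ 3)
      + 2 * (x * Real.cosh x - Real.sinh x) / Real.sinh x ^ 3
      + ((x / Real.sinh x) ^ 2
          + 2 * t * (x * Real.cosh x - Real.sinh x) / Real.sinh x ^ 3)
        * (x ^ 2 / (4 * t ^ 2) - 4)) *
    Real.exp (-(x ^ 2 / (4 * t) + 4 * t))

lemma hasDerivAt_p_x (t : ℝ) (ht : t ≠ 0) (x : ℝ) (hx : 0 < x) :
    HasDerivAt (fun y => (4 * π * t) ^ (-(5 : ℝ) / 2) *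
        ((y / Real.sinh y) ^ 2 +
          2 * t * (y * Real.cosh y - Real.sinh y) / (Real.sinh y) ^ 3) *
        Real.exp (-(y ^ 2 / (4 * t) + 4 * t))) (fdx t x) x := by
  have hs : Real.sinh x ≠ 0 := ne_of_gt (Real.sinh_pos_iff.2 hx)
  have hsinh := Real.hasDerivAt_sinh x
  have hcosh := Real.hasDerivAt_cosh x
  have h1 := (hasDerivAt_id x).div hsinh hs
  have h2 := h1.pow 2
  have h3 := ((((hasDerivAt_id x).mul hcosh).sub hsinh).const_mul (2 * t)).div
      (hsinh.pow 3) (pow_ne_zero 3 hs)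
  have hB := h2.add h3
  have hE := (((hasDerivAt_pow 2 x).div_const (4 * t)).add_const (4 * t)).neg.exp
  have H := (hB.const_mul ((4 * π * t) ^ (-(5 : ℝ) / 2))).mul hE
  convert H using 1
  case e'_4 => rfl
  case e'_5 => rfl
  case e'_8 => rfl
  unfold fdx
  simp only [Pi.add_apply, Pi.sub_apply, Pi.mul_apply, Pi.div_apply, Pi.pow_apply, Pi.neg_apply, id_eq, Nat.cast_ofNat,
    show (2 : ℕ) - 1 = 1 from rfl, pow_one]
  field_simp
  ring

lemma hasDerivAt_fdx (t : ℝ) (ht : t ≠ 0) (x : ℝ) (hx : 0 < x) :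
    HasDerivAt (fdx t) (gdx t x) x := by
  have hs : Real.sinh x ≠ 0 := ne_of_gt (Real.sinh_pos_iff.2 hx)
  have hsinh := Real.hasDerivAt_sinh x
  have hcosh := Real.hasDerivAt_cosh x
  have g1 := (((hasDerivAt_id x).const_mul 2).div (hsinh.pow 2) (pow_ne_zero 2 hs))
  have g2 := (((hasDerivAt_pow 2 x).const_mul 2).mul hcosh).div (hsinh.pow 3) (pow_ne_zero 3 hs)
  have g3 := (((((hasDerivAt_id x).mul (hsinh.pow 2)).sub
        (((hasDerivAt_id x).const_mul 3).mul (hcosh.pow 2))).add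
        ((hsinh.const_mul 3).mul hcosh)).const_mul (2 * t)).div
      (hsinh.pow 4) (pow_ne_zero 4 hs)
  have hB := ((hasDerivAt_id x).div hsinh hs).pow 2 |>.add
      (((((hasDerivAt_id x).mul hcosh).sub hsinh).const_mul (2 * t)).div
        (hsinh.pow 3) (pow_ne_zero 3 hs))
  have g4 := ((hasDerivAt_id x).div_const (2 * t)).mul hB
  have hG := ((g1.sub g2).add g3).sub g4
  have hE := (((hasDerivAt_pow 2 x).div_const (4 * t)).add_const (4 * t)).neg.exp
  have H := (hG.const_mul ((4 * π * t) ^ (-(5 : ℝ) / 2))).mul hE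
  have heq : fdx t = fun y => (4 * π * t) ^ (-(5 : ℝ) / 2) *
      (2 * y / Real.sinh y ^ 2 - 2 * y ^ 2 * Real.cosh y / Real.sinh y ^ 3
        + 2 * t * (y * Real.sinh y ^ 2 - 3 * y * Real.cosh y ^ 2
            + 3 * Real.sinh y * Real.cosh y) / Real.sinh y ^ 4
        - y / (2 * t) * ((y / Real.sinh y) ^ 2
            + 2 * t * (y * Real.cosh y - Real.sinh y) / Real.sinh y ^ 3)) *
      Real.exp (-(y ^ 2 / (4 * t) + 4 * t)) := rfl
  rw [heq]
  convert H using 1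
  case e'_4 => rfl
  case e'_5 => rfl
  case e'_8 => rfl
  unfold gdx
  simp only [Pi.add_apply, Pi.sub_apply, Pi.mul_apply, Pi.div_apply, Pi.pow_apply, Pi.neg_apply, id_eq, Nat.cast_ofNat,
    show (2 : ℕ) - 1 = 1 from rfl, pow_one]
  field_simp
  ring

lemma hasDerivAt_p_t (r t : ℝ) (hr : 0 < r) (ht : 0 < t) :
    HasDerivAt (fun t' => (4 * π * t') ^ (-(5 : ℝ) / 2) *
        ((r / Real.sinh r) ^ 2 +
          2 * t' * (r * Real.cosh r - Real.sinh r) / (Real.sinh r) ^ 3) *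
        Real.exp (-(r ^ 2 / (4 * t') + 4 * t'))) (pdt t r) t := by
  have hpos : (0 : ℝ) < 4 * π * t := by positivity
  have hbase : HasDerivAt (fun t' : ℝ => 4 * π * t') (4 * π) t := by
    simpa using (hasDerivAt_id t).const_mul (4 * π)
  have hA : HasDerivAt (fun t' : ℝ => (4 * π * t') ^ (-(5 : ℝ) / 2))
      ((-(5 : ℝ) / 2 * (4 * π * t) ^ (-(5 : ℝ) / 2 - 1)) * (4 * π)) t :=
    (Real.hasDerivAt_rpow_const (Or.inl hpos.ne')).comp t hbase
  have hB : HasDerivAt (fun t' : ℝ => (r / Real.sinh r) ^ 2 +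
      2 * t' * (r * Real.cosh r - Real.sinh r) / (Real.sinh r) ^ 3)
      (2 * 1 * (r * Real.cosh r - Real.sinh r) / (Real.sinh r) ^ 3) t :=
    ((((hasDerivAt_id t).const_mul 2).mul_const
        (r * Real.cosh r - Real.sinh r)).div_const ((Real.sinh r) ^ 3)).const_add _
  have h4t : HasDerivAt (fun t' : ℝ => 4 * t') 4 t := by
    simpa using (hasDerivAt_id t).const_mul 4
  have h4tne : 4 * t ≠ 0 := by positivity
  have hE := (((hasDerivAt_const t (r ^ 2)).div h4t h4tne).add
      ((hasDerivAt_id t).const_mul 4)).neg.exp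
  have H := (hA.mul hB).mul hE
  convert H using 1
  case e'_4 => rfl
  case e'_5 => rfl
  case e'_8 => rfl
  have h7 : (4 * π * t) ^ (-(5 : ℝ) / 2 - 1)
      = (4 * π * t) ^ (-(5 : ℝ) / 2) / (4 * π * t) := by
    rw [Real.rpow_sub hpos, Real.rpow_one]
  rw [h7]
  unfold pdt
  have hpi : π ≠ 0 := Real.pi_ne_zero
  simp only [Pi.add_apply, Pi.sub_apply, Pi.mul_apply, Pi.div_apply, Pi.pow_apply, Pi.neg_apply, id_eq, Nat.cast_ofNat]
  field_simp
  ring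

theorem stmt_2 (r t : ℝ) (hr : 0 < r) (ht : 0 < t) :
    let p : ℝ → ℝ → ℝ := fun r t =>
      (4 * π * t) ^ (-(5 : ℝ) / 2) *
        ((r / Real.sinh r) ^ 2 +
          2 * t * (r * Real.cosh r - Real.sinh r) / (Real.sinh r) ^ 3) *
        Real.exp (-(r ^ 2 / (4 * t) + 4 * t))
    deriv (fun t' => p r t') t =
      deriv (fun r' => deriv (fun r'' => p r'' t) r') r
        + 4 * (Real.cosh r / Real.sinh r) * deriv (fun r' => p r' t) r := by
  intro p
  have hs : Real.sinh r ≠ 0 := ne_of_gt (Real.sinh_pos_iff.2 hr)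
  have Ht : HasDerivAt (fun t' => p r t') (pdt t r) t := hasDerivAt_p_t r t hr ht
  have Hx : ∀ x, 0 < x → HasDerivAt (fun y => p y t) (fdx t x) x :=
    fun x hx => hasDerivAt_p_x t ht.ne' x hx
  have hmid : deriv (fun r' => deriv (fun r'' => p r'' t) r') r = gdx t r := by
    have hev : (fun r' => deriv (fun r'' => p r'' t) r') =ᶠ[nhds r] fdx t := by
      filter_upwards [Ioi_mem_nhds hr] with x hx
      exact (Hx x hx).deriv
    rw [hev.deriv_eq, (hasDerivAt_fdx t ht.ne' r hr).deriv]
  rw [Ht.deriv, hmid, (Hx r hr).deriv]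

  unfold pdt gdx fdx
  field_simp
  ring_nf
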